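/- Let q = p^h, e ∣ h, b ∈ F_{p^e}, and T_b = {α ∈ F_q : Tr(α) = b}. Then for every a ∈ T_b, the product ∏_{α ∈ T_b, α ≠ a} (a - α) equals 1. -/

import Mathlib

open Polynomial

/-- The trace polynomial `x + x^{p^e} + ⋯ + x^{p^{h-e}}` from `F_{p^h}` to `F_{p^e}`. -/
noncomputable def tracePoly (F : Type*) [Field F] (p e h : ℕ) : Polynomial F :=
  ∑ i ∈ Finset.range (h / e), X ^ (p ^ (e * i))

theorem prod_diffs_in_trace_fiber_eq_one (p e h : ℕ) (hp : p.Prime) (he : 0 < e)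
    (hdvd : e ∣ h) (F : Type*) [Field F] [Fintype F] [DecidableEq F] [CharP F p]
    (hcard : Fintype.card F = p ^ h)
    (b : F) (hb : b ^ (p ^ e) = b)
    (a : F) (ha : (tracePoly F p e h).eval a = b) :
    ∏ α ∈ (Finset.univ.filter (fun α : F => (tracePoly F p e h).eval α = b)).erase a,
        (a - α) = 1 := by
  classical
  haveI : Fact p.Prime := ⟨hp⟩
  haveI : ExpChar F p := ExpChar.prime hp
  have hp1 : 1 < p := hp.one_lt
  have hh : h ≠ 0 := by
    rintro rfl
    have h2 : 1 < Fintype.card F := Fintype.one_lt_card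
    rw [hcard] at h2; simp at h2
  obtain ⟨m, hm⟩ : ∃ m, h / e = m + 1 := by
    have : 0 < h / e := Nat.div_pos (Nat.le_of_dvd (Nat.pos_of_ne_zero hh) hdvd) he
    exact ⟨h / e - 1, by omega⟩
  have hem : e * (m + 1) = h := by
    have := Nat.mul_div_cancel' hdvd
    rw [hm] at this; linarith
  set T : Polynomial F := tracePoly F p e h with hT
  -- splitting off the top term
  have hTsplit : T = (∑ i ∈ Finset.range m, (X : F[X]) ^ p ^ (e * i)) + X ^ p ^ (e * m) := by
    rw [hT, tracePoly, hm, Finset.sum_range_succ]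
  have hdeglow : (∑ i ∈ Finset.range m, (X : F[X]) ^ p ^ (e * i)).degree
      < ((p ^ (e * m) : ℕ) : WithBot ℕ) := by
    refine lt_of_le_of_lt (degree_sum_le _ _) ?_
    rw [Finset.sup_lt_iff (by exact_mod_cast WithBot.bot_lt_coe _)]
    intro i hi
    rw [degree_X_pow]
    exact_mod_cast Nat.pow_lt_pow_right hp1
      ((Nat.mul_lt_mul_left he).mpr (Finset.mem_range.mp hi))
  have hTmonic : T.Monic := by
    rw [hTsplit]
    exact (monic_X_pow _).add_of_right (by rw [degree_X_pow]; exact hdeglow)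
  have hTdeg : T.degree = ((p ^ (e * m) : ℕ) : WithBot ℕ) := by
    rw [hTsplit, degree_add_eq_right_of_degree_lt (by rw [degree_X_pow]; exact hdeglow),
      degree_X_pow]
  -- the fiber polynomial
  set g : F[X] := T - C b with hg
  have hCb : (C b).degree < T.degree := by
    refine lt_of_le_of_lt degree_C_le ?_
    rw [hTdeg]
    exact_mod_cast pow_pos (by omega : 0 < p) (e * m)
  have hgmonic : g.Monic := hTmonic.sub_of_left hCb
  have hgdeg : g.natDegree = p ^ (e * m) := by
    have : g.degree = ((p ^ (e * m) : ℕ) : WithBot ℕ) := by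
      rw [hg, degree_sub_eq_left_of_degree_lt hCb, hTdeg]
    exact natDegree_eq_of_degree_eq_some this
  -- the derivative of g is 1
  have hder : derivative g = 1 := by
    rw [hg, derivative_sub, derivative_C, sub_zero, hT, tracePoly, map_sum, hm,
      Finset.sum_range_succ']
    have h0 : derivative ((X : F[X]) ^ p ^ (e * 0)) = 1 := by
      simp
    rw [h0, Finset.sum_eq_zero, zero_add]
    intro i _
    rw [derivative_X_pow]
    have : ((p ^ (e * (i + 1)) : ℕ) : F) = 0 := by
      rw [Nat.cast_pow, CharP.cast_eq_zero F p, zero_pow (by positivity)]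
    rw [this, map_zero, zero_mul]
  -- additivity of the trace map
  have hadd : ∀ x y : F, eval (x + y) T = eval x T + eval y T := by
    intro x y
    simp only [hT, tracePoly, eval_finset_sum, eval_pow, eval_X, add_pow_char_pow,
      Finset.sum_add_distrib]
  have hsub : ∀ x y : F, eval (x - y) T = eval x T - eval y T := by
    intro x y
    have := hadd (x - y) y
    rw [sub_add_cancel] at this
    exact eq_sub_of_add_eq this.symm
  -- the image of the trace map consists of fixed points of x ^ p^e
  have hfix : ∀ x : F, (eval x T) ^ p ^ e = eval x T := by
    intro x
    have hxc : x ^ p ^ h = x := by rw [← hcard]; exact FiniteField.pow_card x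
    have hmap : (eval x T) ^ p ^ e = ∑ i ∈ Finset.range (m + 1), x ^ p ^ (e * (i + 1)) := by
      rw [hT, tracePoly, eval_finset_sum, hm]
      rw [← iterateFrobenius_def (R := F) (p := p) (n := e), map_sum]
      refine Finset.sum_congr rfl fun i _ => ?_
      rw [iterateFrobenius_def, eval_pow, eval_X, ← pow_mul, ← pow_add]
      congr 1
    have hTx : eval x T = ∑ i ∈ Finset.range (m + 1), x ^ p ^ (e * i) := by
      rw [hT, tracePoly, eval_finset_sum, hm]
      simp [eval_pow]
    have hs1 : ∑ i ∈ Finset.range (m + 1), x ^ p ^ (e * (i + 1)) =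
        (∑ i ∈ Finset.range m, x ^ p ^ (e * (i + 1))) + x ^ p ^ (e * (m + 1)) :=
      Finset.sum_range_succ _ _
    have hs2 : ∑ i ∈ Finset.range (m + 1), x ^ p ^ (e * i) =
        (∑ i ∈ Finset.range m, x ^ p ^ (e * (i + 1))) + x ^ p ^ (e * 0) :=
      Finset.sum_range_succ' _ _
    rw [hmap, hTx, hs1, hs2, hem, hxc]
    norm_num
  -- counting
  set S : Finset F := Finset.univ.filter (fun α : F => eval α T = b) with hS
  have haS : a ∈ S := by
    rw [hS, Finset.mem_filter]
    exact ⟨Finset.mem_univ a, ha⟩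
  set I : Finset F := Finset.image (fun x : F => eval x T) Finset.univ with hI
  have hIcard : I.card ≤ p ^ e := by
    set P : F[X] := X ^ p ^ e - X with hP
    have hdX : (X : F[X]).degree < ((X : F[X]) ^ p ^ e).degree := by
      rw [degree_X_pow, degree_X]
      exact_mod_cast Nat.one_lt_pow (by omega) hp1
    have hPmonic : P.Monic := (monic_X_pow _).sub_of_left hdX
    have hPdeg : P.natDegree = p ^ e := by
      have : P.degree = ((p ^ e : ℕ) : WithBot ℕ) := by
        rw [hP, degree_sub_eq_left_of_degree_lt hdX, degree_X_pow]
      exact natDegree_eq_of_degree_eq_some this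
    have hsub2 : I ⊆ P.roots.toFinset := by
      intro y hy
      obtain ⟨x, _, hx⟩ := Finset.mem_image.mp hy
      rw [Multiset.mem_toFinset, mem_roots hPmonic.ne_zero]
      simp only [hP, IsRoot, eval_sub, eval_pow, eval_X]
      rw [← hx, hfix x, sub_self]
    calc I.card ≤ P.roots.toFinset.card := Finset.card_le_card hsub2
      _ ≤ Multiset.card P.roots := Multiset.toFinset_card_le _
      _ ≤ P.natDegree := P.card_roots'
      _ = p ^ e := hPdeg
  have hfibcard : ∀ y ∈ I, (Finset.univ.filter (fun x : F => eval x T = y)).card = S.card := by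
    intro y hy
    obtain ⟨x₀, _, hx₀⟩ := Finset.mem_image.mp hy
    refine Finset.card_nbij' (fun t => t - x₀ + a) (fun t => t - a + x₀) ?_ ?_ ?_ ?_
    · intro t ht
      rw [Finset.mem_coe, Finset.mem_filter] at ht ⊢
      refine ⟨Finset.mem_univ _, ?_⟩
      rw [hadd, hsub, ht.2, hx₀, ha]
      ring
    · intro t ht
      rw [Finset.mem_coe, Finset.mem_filter] at ht
      rw [Finset.mem_coe, Finset.mem_filter]
      refine ⟨Finset.mem_univ _, ?_⟩
      rw [hadd, hsub, ht.2, hx₀, ha]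
      ring
    · intro t _; ring
    · intro t _; ring
  have hcount : p ^ h = I.card * S.card := by
    have h0 := Finset.card_eq_sum_card_fiberwise (s := (Finset.univ : Finset F)) (t := I)
      (f := fun x : F => eval x T) (fun x _ => Finset.mem_image_of_mem _ (Finset.mem_univ x))
    rw [Finset.sum_congr rfl hfibcard, Finset.sum_const, smul_eq_mul] at h0
    rw [← hcard, ← Finset.card_univ, h0]
  have hScard : p ^ (e * m) ≤ S.card := by
    have hsplit : p ^ e * p ^ (e * m) = p ^ h := by
      rw [← pow_add, ← hem]; ring_nf
    have : p ^ e * p ^ (e * m) ≤ p ^ e * S.card := by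
      rw [hsplit, hcount]
      exact Nat.mul_le_mul_right _ hIcard
    exact Nat.le_of_mul_le_mul_left this (pow_pos (by omega) e)
  -- g is the product of linear factors over S
  have hgprod : g = ∏ α ∈ S, (X - C α) := by
    symm
    refine eq_of_dvd_of_natDegree_le_of_leadingCoeff ?_ ?_ ?_
    · rw [Finset.prod_eq_multiset_prod]
      refine (Multiset.prod_X_sub_C_dvd_iff_le_roots hgmonic.ne_zero _).mpr ?_
      rw [Multiset.le_iff_subset S.nodup]
      intro α hα
      have hαS : α ∈ S := hα
      rw [hS, Finset.mem_filter] at hαS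
      rw [mem_roots hgmonic.ne_zero]
      simp [hg, IsRoot, hαS.2]
    · rw [hgdeg, natDegree_prod_of_monic _ _ (fun i _ => monic_X_sub_C i)]
      simpa using hScard
    · rw [(monic_prod_of_monic _ _ (fun i _ => monic_X_sub_C i)).leadingCoeff,
        hgmonic.leadingCoeff]
  -- conclude via the derivative
  have hnodal : g = Lagrange.nodal S id := by
    rw [hgprod, Lagrange.nodal_eq]
    rfl
  have h1 : eval a (derivative g) = 1 := by rw [hder, eval_one]
  have h2 : eval a (derivative g) = ∏ α ∈ S.erase a, (a - α) := by
    rw [hnodal]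
    have := Lagrange.eval_nodal_derivative_eval_node_eq (v := (id : F → F)) (i := a)
      (s := S) haS
    simp only [id] at this
    rw [this, Lagrange.eval_nodal]
    simp
  rw [← h2, h1]
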